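/- Let n ≥ 1 be an integer and let u₀ ∈ L¹(ℝⁿ). Set M = ∫_{ℝⁿ} u₀(x) dx. Then t^{n/2} · ‖u₀ * G_t − M·G_t‖_{L^∞(ℝⁿ)} → 0 as t → ∞. -/

import Mathlib

open MeasureTheory Filter Real

/-- The Euclidean heat kernel on `ℝⁿ`: `G_t(x) = (4πt)^{-n/2} exp(-‖x‖²/(4t))`. -/
noncomputable def heatKernel (n : ℕ) (t : ℝ) (x : EuclideanSpace ℝ (Fin n)) : ℝ :=
  (4 * Real.pi * t) ^ (-(n : ℝ) / 2) * Real.exp (-‖x‖ ^ 2 / (4 * t))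

lemma exp_neg_sq_lipschitz : LipschitzWith 1 (fun s : ℝ => Real.exp (-s ^ 2)) := by
  have hd : ∀ s : ℝ, HasDerivAt (fun s : ℝ => Real.exp (-s ^ 2))
      (Real.exp (-s ^ 2) * (-(2 * s))) s := by
    intro s
    have h1 : HasDerivAt (fun s : ℝ => -s ^ 2) (-(2 * s)) s := by
      exact ((hasDerivAt_pow 2 s).neg).congr_deriv (by simp)
    exact h1.exp
  apply lipschitzWith_of_nnnorm_deriv_le (fun s => (hd s).differentiableAt)
  intro s
  rw [(hd s).deriv, ← NNReal.coe_le_coe]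
  have hE : (1 : ℝ) + s ^ 2 ≤ Real.exp (s ^ 2) := by
    have := Real.add_one_le_exp (s ^ 2); linarith
  have hprod : Real.exp (-s ^ 2) * Real.exp (s ^ 2) = 1 := by
    rw [← Real.exp_add]; simp
  have he : 0 < Real.exp (-s ^ 2) := Real.exp_pos _
  have habs : 2 * |s| ≤ 1 + s ^ 2 := by nlinarith [sq_nonneg (|s| - 1), sq_abs s]
  have hnorm : ‖Real.exp (-s ^ 2) * (-(2 * s))‖ = Real.exp (-s ^ 2) * (2 * |s|) := by
    rw [norm_mul]
    simp [abs_of_pos he, abs_mul]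
  push_cast
  rw [hnorm]
  nlinarith [mul_le_mul_of_nonneg_left habs he.le]

lemma heatKernel_abs_le (n : ℕ) {t : ℝ} (ht : 0 < t) (z : EuclideanSpace ℝ (Fin n)) :
    ‖heatKernel n t z‖ ≤ (4 * Real.pi * t) ^ (-(n : ℝ) / 2) := by
  have hc0 : (0:ℝ) < (4 * Real.pi * t) ^ (-(n : ℝ) / 2) :=
    Real.rpow_pos_of_pos (by positivity) _
  have he1 : Real.exp (-‖z‖ ^ 2 / (4 * t)) ≤ 1 := by
    apply Real.exp_le_one_iff.2
    have : (0:ℝ) ≤ ‖z‖ ^ 2 / (4 * t) := by positivity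
    rw [neg_div]; linarith
  have he0 : (0:ℝ) < Real.exp (-‖z‖ ^ 2 / (4 * t)) := Real.exp_pos _
  rw [heatKernel, norm_mul, Real.norm_eq_abs, Real.norm_eq_abs,
    abs_of_pos hc0, abs_of_pos he0]
  nlinarith

lemma heatKernel_diff_bound (n : ℕ) {t : ℝ} (ht : 0 < t)
    (x y : EuclideanSpace ℝ (Fin n)) :
    ‖heatKernel n t (x - y) - heatKernel n t x‖ ≤
      (4 * Real.pi * t) ^ (-(n : ℝ) / 2) * min 2 (‖y‖ / Real.sqrt (4 * t)) := by
  set c := (4 * Real.pi * t) ^ (-(n : ℝ) / 2) with hc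
  have hc0 : 0 < c := Real.rpow_pos_of_pos (by positivity) _
  set s := Real.sqrt (4 * t) with hs
  have hs0 : 0 < s := Real.sqrt_pos.2 (by linarith)
  have hrw : ∀ z : EuclideanSpace ℝ (Fin n),
      Real.exp (-‖z‖ ^ 2 / (4 * t)) = Real.exp (-(‖z‖ / s) ^ 2) := by
    intro z
    congr 1
    rw [div_pow, hs, Real.sq_sqrt (by linarith : (0:ℝ) ≤ 4 * t)]
    ring
  have key : |Real.exp (-‖x - y‖ ^ 2 / (4 * t)) - Real.exp (-‖x‖ ^ 2 / (4 * t))|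
      ≤ min 2 (‖y‖ / s) := by
    refine le_min ?_ ?_
    · have h1 : Real.exp (-‖x - y‖ ^ 2 / (4 * t)) ≤ 1 := by
        apply Real.exp_le_one_iff.2
        have : (0:ℝ) ≤ ‖x - y‖ ^ 2 / (4 * t) := by positivity
        rw [neg_div]; linarith
      have h2 : Real.exp (-‖x‖ ^ 2 / (4 * t)) ≤ 1 := by
        apply Real.exp_le_one_iff.2
        have : (0:ℝ) ≤ ‖x‖ ^ 2 / (4 * t) := by positivity
        rw [neg_div]; linarith
      have h3 := Real.exp_pos (-‖x - y‖ ^ 2 / (4 * t))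
      have h4 := Real.exp_pos (-‖x‖ ^ 2 / (4 * t))
      rw [abs_sub_le_iff]
      constructor <;> linarith
    · rw [hrw (x - y), hrw x]
      have hlip := exp_neg_sq_lipschitz.dist_le_mul (‖x - y‖ / s) (‖x‖ / s)
      rw [Real.dist_eq, Real.dist_eq, NNReal.coe_one, one_mul] at hlip
      refine hlip.trans ?_
      rw [div_sub_div_same, abs_div, abs_of_pos hs0]
      gcongr
      calc |‖x - y‖ - ‖x‖| ≤ ‖(x - y) - x‖ := abs_norm_sub_norm_le _ _
        _ = ‖y‖ := by simp
  calc ‖heatKernel n t (x - y) - heatKernel n t x‖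
      = c * |Real.exp (-‖x - y‖ ^ 2 / (4 * t)) - Real.exp (-‖x‖ ^ 2 / (4 * t))| := by
        rw [heatKernel, heatKernel, ← mul_sub, norm_mul, Real.norm_eq_abs,
          Real.norm_eq_abs, abs_of_pos hc0]
    _ ≤ c * min 2 (‖y‖ / s) := by
        exact mul_le_mul_of_nonneg_left key hc0.le

lemma key_bound (n : ℕ) {t : ℝ} (ht : 0 < t)
    (u₀ : EuclideanSpace ℝ (Fin n) → ℝ) (hu₀ : Integrable u₀)
    (x : EuclideanSpace ℝ (Fin n)) :
    ‖(∫ y, u₀ y * heatKernel n t (x - y)) - (∫ x, u₀ x) * heatKernel n t x‖ ≤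
      (4 * Real.pi * t) ^ (-(n : ℝ) / 2) *
        ∫ y, min 2 (‖y‖ / Real.sqrt (4 * t)) * |u₀ y| := by
  set c := (4 * Real.pi * t) ^ (-(n : ℝ) / 2) with hc
  have hc0 : 0 < c := Real.rpow_pos_of_pos (by positivity) _
  have hGcont : Continuous (heatKernel n t) := by
    unfold heatKernel
    fun_prop
  have hmeasmin : Continuous (fun y : EuclideanSpace ℝ (Fin n) =>
      min 2 (‖y‖ / Real.sqrt (4 * t))) := by fun_prop
  have hInt1 : Integrable (fun y => u₀ y * heatKernel n t (x - y)) := by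
    have h := hu₀.bdd_mul
        ((hGcont.comp (continuous_const.sub continuous_id)).aestronglyMeasurable)
        (Eventually.of_forall fun y => heatKernel_abs_le n ht (x - y))
    exact h.congr (Eventually.of_forall fun y => mul_comm _ _)
  have hInt2 : Integrable (fun y => u₀ y * heatKernel n t x) := hu₀.mul_const _
  have hIntg : Integrable (fun y : EuclideanSpace ℝ (Fin n) =>
      c * (min 2 (‖y‖ / Real.sqrt (4 * t)) * |u₀ y|)) := by
    refine Integrable.const_mul ?_ c
    exact hu₀.abs.bdd_mul hmeasmin.aestronglyMeasurable
      (Eventually.of_forall fun y => by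
        rw [Real.norm_eq_abs, abs_of_nonneg (le_min (by norm_num) (by positivity))]
        exact min_le_left _ _)
  have hM : (∫ x, u₀ x) * heatKernel n t x = ∫ y, u₀ y * heatKernel n t x :=
    (integral_mul_const _ _).symm
  rw [hM, ← integral_sub hInt1 hInt2]
  have hbound : ∀ y, ‖u₀ y * heatKernel n t (x - y) - u₀ y * heatKernel n t x‖ ≤
      c * (min 2 (‖y‖ / Real.sqrt (4 * t)) * |u₀ y|) := by
    intro y
    rw [← mul_sub, norm_mul, Real.norm_eq_abs]
    calc |u₀ y| * ‖heatKernel n t (x - y) - heatKernel n t x‖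
        ≤ |u₀ y| * (c * min 2 (‖y‖ / Real.sqrt (4 * t))) :=
          mul_le_mul_of_nonneg_left (heatKernel_diff_bound n ht x y) (abs_nonneg _)
      _ = c * (min 2 (‖y‖ / Real.sqrt (4 * t)) * |u₀ y|) := by ring
  calc ‖∫ y, (u₀ y * heatKernel n t (x - y) - u₀ y * heatKernel n t x)‖
      ≤ ∫ y, c * (min 2 (‖y‖ / Real.sqrt (4 * t)) * |u₀ y|) :=
        norm_integral_le_of_norm_le hIntg (Eventually.of_forall hbound)
    _ = c * ∫ y, min 2 (‖y‖ / Real.sqrt (4 * t)) * |u₀ y| := integral_const_mul _ _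

lemma sqrt_tendsto_atTop' : Tendsto Real.sqrt atTop atTop := by
  refine tendsto_atTop_atTop.2 fun b => ⟨max 0 b ^ 2, fun a ha => ?_⟩
  have h0 : (0:ℝ) ≤ max 0 b := le_max_left _ _
  have h := Real.sqrt_le_sqrt ha
  rw [Real.sqrt_sq h0] at h
  exact le_trans (le_max_right 0 b) h

lemma I_tendsto (n : ℕ) (u₀ : EuclideanSpace ℝ (Fin n) → ℝ) (hu₀ : Integrable u₀) :
    Tendsto (fun t : ℝ => ∫ y, min 2 (‖y‖ / Real.sqrt (4 * t)) * |u₀ y|)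
      atTop (nhds 0) := by
  have h := tendsto_integral_filter_of_dominated_convergence (μ := volume)
    (l := atTop) (F := fun (t : ℝ) (y : EuclideanSpace ℝ (Fin n)) =>
      min 2 (‖y‖ / Real.sqrt (4 * t)) * |u₀ y|)
    (f := fun _ => (0:ℝ)) (bound := fun y => 2 * |u₀ y|)
    (by
      refine Eventually.of_forall fun t => ?_
      have : Continuous (fun y : EuclideanSpace ℝ (Fin n) =>
          min 2 (‖y‖ / Real.sqrt (4 * t))) := by fun_prop
      exact this.aestronglyMeasurable.mul hu₀.abs.aestronglyMeasurable)
    (by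
      refine Eventually.of_forall fun t => Eventually.of_forall fun y => ?_
      have h0 : (0:ℝ) ≤ min 2 (‖y‖ / Real.sqrt (4 * t)) :=
        le_min (by norm_num) (by positivity)
      rw [Real.norm_eq_abs, abs_mul, abs_of_nonneg h0, abs_abs]
      exact mul_le_mul_of_nonneg_right (min_le_left _ _) (abs_nonneg _))
    ((hu₀.abs.const_mul 2))
    (by
      refine Eventually.of_forall fun y => ?_
      have hlin : Tendsto (fun t : ℝ => 4 * t) atTop atTop :=
        Tendsto.const_mul_atTop (by norm_num) tendsto_id
      have hsq : Tendsto (fun t : ℝ => Real.sqrt (4 * t)) atTop atTop :=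
        sqrt_tendsto_atTop'.comp hlin
      have hdiv : Tendsto (fun t : ℝ => ‖y‖ / Real.sqrt (4 * t)) atTop (nhds 0) :=
        Tendsto.div_atTop tendsto_const_nhds hsq
      have hmin : Tendsto (fun t : ℝ => min 2 (‖y‖ / Real.sqrt (4 * t)))
          atTop (nhds 0) := by
        have := tendsto_const_nhds (α := ℝ) (x := (2:ℝ)) (f := atTop (α := ℝ)) |>.min hdiv
        simpa using this
      simpa using hmin.mul_const |u₀ y|)
  simpa using h

/-- For `u₀ ∈ L¹(ℝⁿ)` with mass `M = ∫ u₀`, one has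
`t^{n/2} · ‖u₀ * G_t − M · G_t‖_{L^∞} → 0` as `t → ∞`. -/
theorem heat_asymptotics_Linfty (n : ℕ) (hn : 1 ≤ n)
    (u₀ : EuclideanSpace ℝ (Fin n) → ℝ) (hu₀ : Integrable u₀) :
    Tendsto
      (fun t : ℝ =>
        ENNReal.ofReal (t ^ ((n : ℝ) / 2)) *
          eLpNorm
            (fun x : EuclideanSpace ℝ (Fin n) =>
              (∫ y, u₀ y * heatKernel n t (x - y)) - (∫ x, u₀ x) * heatKernel n t x)
            ⊤ volume)
      atTop (nhds 0) := by
  set c0 := (4 * Real.pi) ^ (-(n : ℝ) / 2) with hc0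
  have hB : Tendsto (fun t : ℝ =>
      ENNReal.ofReal (c0 * ∫ y, min 2 (‖y‖ / Real.sqrt (4 * t)) * |u₀ y|))
      atTop (nhds 0) := by
    have := ENNReal.tendsto_ofReal ((I_tendsto n u₀ hu₀).const_mul c0)
    simpa using this
  refine tendsto_of_tendsto_of_tendsto_of_le_of_le' tendsto_const_nhds hB
    (Eventually.of_forall fun t => zero_le) ?_
  filter_upwards [eventually_gt_atTop (0:ℝ)] with t ht
  set I := ∫ y, min 2 (‖y‖ / Real.sqrt (4 * t)) * |u₀ y| with hIdef
  have hsnorm : eLpNorm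
      (fun x : EuclideanSpace ℝ (Fin n) =>
        (∫ y, u₀ y * heatKernel n t (x - y)) - (∫ x, u₀ x) * heatKernel n t x)
      ⊤ volume ≤ ENNReal.ofReal ((4 * Real.pi * t) ^ (-(n : ℝ) / 2) * I) := by
    rw [eLpNorm_exponent_top]
    exact eLpNormEssSup_le_of_ae_bound
      (Eventually.of_forall fun x => key_bound n ht u₀ hu₀ x)
  calc ENNReal.ofReal (t ^ ((n : ℝ) / 2)) *
        eLpNorm (fun x : EuclideanSpace ℝ (Fin n) =>
          (∫ y, u₀ y * heatKernel n t (x - y)) - (∫ x, u₀ x) * heatKernel n t x)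
          ⊤ volume
      ≤ ENNReal.ofReal (t ^ ((n : ℝ) / 2)) *
          ENNReal.ofReal ((4 * Real.pi * t) ^ (-(n : ℝ) / 2) * I) :=
        mul_le_mul_right hsnorm _
    _ = ENNReal.ofReal (t ^ ((n : ℝ) / 2) *
          ((4 * Real.pi * t) ^ (-(n : ℝ) / 2) * I)) :=
        (ENNReal.ofReal_mul (Real.rpow_nonneg ht.le _)).symm
    _ = ENNReal.ofReal (c0 * I) := by
        congr 1
        have hsplit : (4 * Real.pi * t) ^ (-(n : ℝ) / 2) = c0 * t ^ (-(n : ℝ) / 2) :=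
          Real.mul_rpow (by positivity) ht.le
        have htt : t ^ ((n : ℝ) / 2) * t ^ (-(n : ℝ) / 2) = 1 := by
          rw [← Real.rpow_add ht, show (n:ℝ)/2 + -(n:ℝ)/2 = 0 by ring, Real.rpow_zero]
        rw [hsplit]
        have : t ^ ((n : ℝ) / 2) * (c0 * t ^ (-(n : ℝ) / 2) * I) =
            (t ^ ((n : ℝ) / 2) * t ^ (-(n : ℝ) / 2)) * (c0 * I) := by ring
        rw [this, htt, one_mul]
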